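/- Let V, V', V'' be symplectic vector spaces over a field k. If L is a Lagrangian subspace of V̄ ⊕ V' and M is a Lagrangian subspace of V̄' ⊕ V'', then the relational composite M∘L = {(u,w) : ∃ v ∈ V', (u,v) ∈ L and (v,w) ∈ M} is a Lagrangian subspace of V̄ ⊕ V''. (Thus linear Lagrangian relations are closed under composition.) -/

import Mathlib

open Module

/-- A subspace is isotropic for a bilinear form if the form vanishes on it. -/
def IsIsotropic {k V : Type*} [Field k] [AddCommGroup V] [Module k V]
    (ω : LinearMap.BilinForm k V) (L : Submodule k V) : Prop :=
  ∀ u ∈ L, ∀ v ∈ L, ω u v = 0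

/-- A subspace is Lagrangian if it is isotropic and of half the total dimension. -/
def IsLagrangian {k V : Type*} [Field k] [AddCommGroup V] [Module k V]
    (ω : LinearMap.BilinForm k V) (L : Submodule k V) : Prop :=
  IsIsotropic ω L ∧ 2 * Module.finrank k ↥L = Module.finrank k V

/-- The direct sum form (ω ⊕ ω')((u,u'),(v,v')) = ω(u,v) + ω'(u',v'). -/
def prodForm {k V W : Type*} [Field k] [AddCommGroup V] [Module k V]
    [AddCommGroup W] [Module k W]
    (ωV : LinearMap.BilinForm k V) (ωW : LinearMap.BilinForm k W) :
    LinearMap.BilinForm k (V × W) :=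
  ωV.comp (LinearMap.fst k V W) (LinearMap.fst k V W) +
  ωW.comp (LinearMap.snd k V W) (LinearMap.snd k V W)

section Aux

variable {k : Type*} [Field k]

theorem prodForm_apply {V W : Type*} [AddCommGroup V] [Module k V]
    [AddCommGroup W] [Module k W]
    (ωV : LinearMap.BilinForm k V) (ωW : LinearMap.BilinForm k W) (p q : V × W) :
    prodForm ωV ωW p q = ωV p.1 q.1 + ωW p.2 q.2 := rfl

/-- An alternating form is skew-symmetric. -/
theorem aux_skew {V : Type*} [AddCommGroup V] [Module k V]
    (ω : LinearMap.BilinForm k V) (halt : ∀ v, ω v v = 0) (u v : V) :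
    ω u v = - ω v u := by
  have h := halt (u + v)
  simp only [map_add, LinearMap.add_apply, halt u, halt v] at h
  linear_combination h

/-- Rank–nullity for the restriction of a map to a submodule. -/
theorem aux_finrank_map_add_inf_ker {X Y : Type*} [AddCommGroup X] [Module k X]
    [FiniteDimensional k X] [AddCommGroup Y] [Module k Y]
    (h : X →ₗ[k] Y) (q : Submodule k X) :
    finrank k ↥(q.map h) + finrank k ↥(q ⊓ LinearMap.ker h) = finrank k ↥q := by
  have H := LinearMap.finrank_range_add_finrank_ker (h.domRestrict q)
  rw [LinearMap.range_domRestrict, LinearMap.ker_domRestrict] at H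
  have e := (Submodule.equivMapOfInjective q.subtype q.injective_subtype
      ((LinearMap.ker h).comap q.subtype)).finrank_eq
  rw [Submodule.map_comap_subtype] at e
  omega

/-- A submodule product is equivalent to the product of the submodules. -/
def prodSubEquiv {X Y : Type*} [AddCommGroup X] [Module k X]
    [AddCommGroup Y] [Module k Y] (p : Submodule k X) (q : Submodule k Y) :
    ↥(p.prod q) ≃ₗ[k] ↥p × ↥q where
  toFun x := (⟨x.1.1, x.2.1⟩, ⟨x.1.2, x.2.2⟩)
  invFun x := ⟨(x.1.1, x.2.1), ⟨x.1.2, x.2.2⟩⟩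
  left_inv x := rfl
  right_inv x := rfl
  map_add' x y := rfl
  map_smul' c x := rfl

theorem aux_orthogonal_sup {V : Type*} [AddCommGroup V] [Module k V]
    (ω : LinearMap.BilinForm k V) (P Q : Submodule k V) :
    ω.orthogonal (P ⊔ Q) = ω.orthogonal P ⊓ ω.orthogonal Q := by
  apply le_antisymm
  · exact le_inf (ω.orthogonal_le le_sup_left) (ω.orthogonal_le le_sup_right)
  · rintro v ⟨hvP, hvQ⟩ n hn
    rcases Submodule.mem_sup.mp hn with ⟨p, hp, q, hq, rfl⟩
    have : ω (p + q) v = ω p v + ω q v := by simp [map_add]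
    rw [this, hvP p hp, hvQ q hq, add_zero]

/-- A Lagrangian subspace of a nondegenerate reflexive form equals its orthogonal. -/
theorem aux_lagrangian_orthogonal_self {V : Type*} [AddCommGroup V] [Module k V]
    [FiniteDimensional k V] (ω : LinearMap.BilinForm k V)
    (hnd : ω.Nondegenerate) (hrefl : ω.IsRefl) (L : Submodule k V)
    (hL : IsLagrangian ω L) : ω.orthogonal L = L := by
  have hle : L ≤ ω.orthogonal L := fun v hv u hu => hL.1 u hu v hv
  have hfr := ω.finrank_orthogonal hnd L
  have hLle : finrank k ↥L ≤ finrank k V := Submodule.finrank_le L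
  have h2 := hL.2
  exact (Submodule.eq_of_le_of_finrank_le hle (by omega)).symm

end Aux

/-- Linear Lagrangian relations are closed under relational composition:
if `L` is Lagrangian in `V̄ ⊕ V'` and `M` is Lagrangian in `V̄' ⊕ V''`, then the
relational composite `M ∘ L` is a Lagrangian subspace of `V̄ ⊕ V''`. -/
theorem lagrangian_relations_closed_under_composition
    {k V V' V'' : Type*} [Field k]
    [AddCommGroup V] [Module k V] [FiniteDimensional k V]
    [AddCommGroup V'] [Module k V'] [FiniteDimensional k V']
    [AddCommGroup V''] [Module k V''] [FiniteDimensional k V'']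
    (ω : LinearMap.BilinForm k V) (ω' : LinearMap.BilinForm k V')
    (ω'' : LinearMap.BilinForm k V'')
    (halt : ∀ v, ω v v = 0) (hnd : ∀ v, (∀ u, ω u v = 0) → v = 0)
    (halt' : ∀ v, ω' v v = 0) (hnd' : ∀ v, (∀ u, ω' u v = 0) → v = 0)
    (halt'' : ∀ v, ω'' v v = 0) (hnd'' : ∀ v, (∀ u, ω'' u v = 0) → v = 0)
    (L : Submodule k (V × V')) (M : Submodule k (V' × V''))
    (hL : IsLagrangian (prodForm (-ω) ω') L)
    (hM : IsLagrangian (prodForm (-ω') ω'') M) :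
    ∃ N : Submodule k (V × V''),
      (N : Set (V × V'')) = {p : V × V'' | ∃ v : V', (p.1, v) ∈ L ∧ (v, p.2) ∈ M} ∧
      IsLagrangian (prodForm (-ω) ω'') N := by
  classical
  -- skew-symmetry
  have skew := aux_skew ω halt
  have skew' := aux_skew ω' halt'
  have skew'' := aux_skew ω'' halt''
  -- the big-space maps
  let f : ((V × V') × V' × V'') →ₗ[k] V' :=
    (LinearMap.snd k V V').comp (LinearMap.fst k (V × V') (V' × V'')) -
    (LinearMap.fst k V' V'').comp (LinearMap.snd k (V × V') (V' × V''))
  let g : ((V × V') × V' × V'') →ₗ[k] V × V'' :=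
    LinearMap.prod
      ((LinearMap.fst k V V').comp (LinearMap.fst k (V × V') (V' × V'')))
      ((LinearMap.snd k V' V'').comp (LinearMap.snd k (V × V') (V' × V'')))
  have f_apply : ∀ x : (V × V') × V' × V'', f x = x.1.2 - x.2.1 := fun _ => rfl
  have g_apply : ∀ x : (V × V') × V' × V'', g x = (x.1.1, x.2.2) := fun _ => rfl
  set T : Submodule k ((V × V') × V' × V'') := (L.prod M) ⊓ LinearMap.ker f with hT
  refine ⟨T.map g, ?_, ?_, ?_⟩
  · -- set equality
    ext p
    simp only [SetLike.mem_coe, Submodule.mem_map, Set.mem_setOf_eq]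
    constructor
    · rintro ⟨x, ⟨⟨hxL, hxM⟩, hxf⟩, rfl⟩
      replace hxf : f x = 0 := hxf
      rw [f_apply, sub_eq_zero] at hxf
      rw [g_apply]
      exact ⟨x.1.2, by simpa using hxL, by rw [hxf]; simpa using hxM⟩
    · rintro ⟨v, hvL, hvM⟩
      refine ⟨((p.1, v), (v, p.2)), ⟨⟨hvL, hvM⟩, ?_⟩, ?_⟩
      · show f ((p.1, v), (v, p.2)) = 0
        rw [f_apply]; simp
      · rw [g_apply]
  · -- isotropy
    rintro a ha b hb
    rcases Submodule.mem_map.mp ha with ⟨x, ⟨⟨hxL, hxM⟩, hxf⟩, rfl⟩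
    rcases Submodule.mem_map.mp hb with ⟨y, ⟨⟨hyL, hyM⟩, hyf⟩, rfl⟩
    replace hxf : f x = 0 := hxf
    replace hyf : f y = 0 := hyf
    rw [f_apply, sub_eq_zero] at hxf
    rw [f_apply, sub_eq_zero] at hyf
    have h1 := hL.1 x.1 hxL y.1 hyL
    have h2 := hM.1 x.2 hxM y.2 hyM
    rw [prodForm_apply] at h1 h2 ⊢
    simp only [LinearMap.neg_apply] at h1 h2 ⊢
    rw [g_apply, g_apply]
    rw [hxf, hyf] at h1
    dsimp only at h1 h2 ⊢
    linear_combination h1 + h2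
  · -- dimension count
    have hrefl' : ω'.IsRefl := fun u v h => by rw [skew' v u, h, neg_zero]
    have hnd'left : ω'.Nondegenerate := (LinearMap.IsRefl.nondegenerate_iff_separatingLeft hrefl').mpr fun v h => hnd' v (fun u => by rw [skew' u v, h u, neg_zero])
    have hΩ₁refl : (prodForm (-ω) ω').IsRefl := by
      intro p q h
      rw [prodForm_apply] at h ⊢
      simp only [LinearMap.neg_apply] at h ⊢
      linear_combination (-1 : k) * h - skew p.1 q.1 + skew' p.2 q.2
    have hΩ₂refl : (prodForm (-ω') ω'').IsRefl := by
      intro p q h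
      rw [prodForm_apply] at h ⊢
      simp only [LinearMap.neg_apply] at h ⊢
      linear_combination (-1 : k) * h - skew' p.1 q.1 + skew'' p.2 q.2
    have hΩ₁nd : (prodForm (-ω) ω').Nondegenerate := by
      refine (LinearMap.IsRefl.nondegenerate_iff_separatingLeft hΩ₁refl).mpr ?_
      intro p h
      have h1 : p.1 = 0 := by
        refine hnd p.1 fun u => ?_
        have := h (u, 0)
        rw [prodForm_apply] at this
        simp only [LinearMap.neg_apply, map_zero] at this
        linear_combination skew u p.1 + this
      have h2 : p.2 = 0 := by
        refine hnd' p.2 fun u => ?_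
        have := h (0, u)
        rw [prodForm_apply] at this
        simp only [LinearMap.neg_apply, map_zero, LinearMap.zero_apply] at this
        linear_combination skew' u p.2 - this
      exact Prod.ext h1 h2
    have hΩ₂nd : (prodForm (-ω') ω'').Nondegenerate := by
      refine (LinearMap.IsRefl.nondegenerate_iff_separatingLeft hΩ₂refl).mpr ?_
      intro p h
      have h1 : p.1 = 0 := by
        refine hnd' p.1 fun u => ?_
        have := h (u, 0)
        rw [prodForm_apply] at this
        simp only [LinearMap.neg_apply, map_zero] at this
        linear_combination skew' u p.1 + this
      have h2 : p.2 = 0 := by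
        refine hnd'' p.2 fun u => ?_
        have := h (0, u)
        rw [prodForm_apply] at this
        simp only [LinearMap.neg_apply, map_zero, LinearMap.zero_apply] at this
        linear_combination skew'' u p.2 - this
      exact Prod.ext h1 h2
    have hLself := aux_lagrangian_orthogonal_self _ hΩ₁nd hΩ₁refl L hL
    have hMself := aux_lagrangian_orthogonal_self _ hΩ₂nd hΩ₂refl M hM
    -- projections of L and M to the middle space
    set P : Submodule k V' := L.map (LinearMap.snd k V V') with hP
    set Q : Submodule k V' := M.map (LinearMap.fst k V' V'') with hQ
    -- the fibers over 0
    have hAeq : ω'.orthogonal P = L.comap (LinearMap.inr k V V') := by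
      ext v
      simp only [Submodule.mem_comap, LinearMap.coe_inr]
      constructor
      · intro hv
        rw [← hLself]
        intro x hx
        have hx2 : x.2 ∈ P := ⟨x, hx, rfl⟩
        have := hv x.2 hx2
        rw [prodForm_apply]
        simp only [LinearMap.neg_apply, map_zero]
        simpa using this
      · intro hv n hn
        rcases hn with ⟨x, hx, rfl⟩
        have := hL.1 x hx (0, v) hv
        rw [prodForm_apply] at this
        simp only [LinearMap.neg_apply, map_zero] at this
        simpa using this
    have hBeq : ω'.orthogonal Q = M.comap (LinearMap.inl k V' V'') := by
      ext v
      simp only [Submodule.mem_comap, LinearMap.coe_inl]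
      constructor
      · intro hv
        rw [← hMself]
        intro x hx
        have hx1 : x.1 ∈ Q := ⟨x, hx, rfl⟩
        have := hv x.1 hx1
        rw [prodForm_apply]
        simp only [LinearMap.neg_apply, map_zero]
        simp only [this, neg_zero, add_zero]
      · intro hv n hn
        rcases hn with ⟨x, hx, rfl⟩
        have := hM.1 x hx (v, 0) hv
        rw [prodForm_apply] at this
        simp only [LinearMap.neg_apply, map_zero, add_zero, neg_eq_zero] at this
        exact this
    -- range of f restricted to L.prod M is P ⊔ Q
    have hrange : (L.prod M).map f = P ⊔ Q := by
      apply le_antisymm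
      · rintro _ ⟨x, ⟨hxL, hxM⟩, rfl⟩
        rw [f_apply]
        exact Submodule.sub_mem _ (Submodule.mem_sup_left ⟨x.1, hxL, rfl⟩)
          (Submodule.mem_sup_right ⟨x.2, hxM, rfl⟩)
      · rw [sup_le_iff]
        constructor
        · rintro _ ⟨x, hx, rfl⟩
          exact ⟨(x, 0), ⟨hx, Submodule.zero_mem M⟩, by rw [f_apply]; simp⟩
        · rintro _ ⟨x, hx, rfl⟩
          refine ⟨(0, -x), ⟨Submodule.zero_mem L, Submodule.neg_mem M hx⟩, ?_⟩
          rw [f_apply]; simp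
    -- kernel of g within T is (j of) A ⊓ B
    let j : V' →ₗ[k] ((V × V') × V' × V'') := LinearMap.prod (LinearMap.inr k V V') (LinearMap.inl k V' V'')
    have hj_inj : Function.Injective j := by
      intro a b h
      have : ((0 : V), a) = ((0 : V), b) := congrArg Prod.fst h
      exact (Prod.ext_iff.mp this).2
    have hker : T ⊓ LinearMap.ker g =
        (ω'.orthogonal P ⊓ ω'.orthogonal Q).map j := by
      rw [hAeq, hBeq]
      ext x
      constructor
      · rintro ⟨⟨⟨hxL, hxM⟩, hxf⟩, hxg⟩
        replace hxf : f x = 0 := hxf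
        replace hxg : g x = 0 := hxg
        rw [f_apply, sub_eq_zero] at hxf
        rw [g_apply, Prod.ext_iff] at hxg
        obtain ⟨h1, h2⟩ := hxg
        refine ⟨x.1.2, ⟨?_, ?_⟩, ?_⟩
        · show ((0 : V), x.1.2) ∈ L
          have : x.1 = (0, x.1.2) := Prod.ext h1 rfl
          rwa [← this]
        · show (x.1.2, (0 : V'')) ∈ M
          have : x.2 = (x.1.2, 0) := Prod.ext hxf.symm h2
          rwa [← this]
        · have hx1 : x.1 = ((0 : V), x.1.2) := Prod.ext h1 rfl
          have hx2 : x.2 = (x.1.2, (0 : V'')) := Prod.ext hxf.symm h2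
          exact (Prod.ext hx1 hx2).symm
      · rintro ⟨v, ⟨hvA, hvB⟩, rfl⟩
        replace hvA : ((0 : V), v) ∈ L := hvA
        replace hvB : (v, (0 : V'')) ∈ M := hvB
        refine ⟨⟨⟨hvA, hvB⟩, ?_⟩, ?_⟩
        · show f (j v) = 0
          rw [f_apply]; simp [j]
        · show g (j v) = 0
          rw [g_apply]; simp [j]
    -- now the finrank bookkeeping
    have e1 := aux_finrank_map_add_inf_ker f (L.prod M)
    have e2 := aux_finrank_map_add_inf_ker g T
    have eLM : finrank k ↥(L.prod M) = finrank k ↥L + finrank k ↥M := by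
      rw [(prodSubEquiv L M).finrank_eq, Module.finrank_prod]
    have eT : L.prod M ⊓ LinearMap.ker f = T := rfl
    have eS : finrank k ↥(P ⊔ Q) + finrank k ↥(ω'.orthogonal (P ⊔ Q)) = finrank k V' := by
      have := ω'.finrank_orthogonal hnd'left (P ⊔ Q)
      have hle : finrank k ↥(P ⊔ Q) ≤ finrank k V' := Submodule.finrank_le _
      omega
    have eK : finrank k ↥(T ⊓ LinearMap.ker g) =
        finrank k ↥(ω'.orthogonal (P ⊔ Q)) := by
      rw [hker, aux_orthogonal_sup]
      exact ((Submodule.equivMapOfInjective j hj_inj _).finrank_eq).symm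
    rw [hrange] at e1
    rw [eT] at e1
    rw [eK] at e2
    have hdimL := hL.2
    have hdimM := hM.2
    rw [Module.finrank_prod] at hdimL hdimM ⊢
    omega
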